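/- Connected-component characterization of IC and IR pricing rules: a pricing rule p is IC and IR if and only if there exist reals h_i^C(v_{-i}) (one per agent i, per v_{-i} ∈ Θ_{-i}, per connected component C of Θ_i(v_{-i})) such that p is the component-wise Groves pricing rule given by these reals and, for every agent i and every v_{-i} ∈ Θ_{-i}, the family (h_i^C(v_{-i}))_C satisfies Constr-C at v_{-i}. -/

import Mathlib

variable {n : ℕ} {Γ : Type*}

/-- The welfare of a type profile: the maximum total value over allocations. -/
noncomputable def welfare [Fintype Γ] [Nonempty Γ] (v : Fin n → Γ → ℝ) : ℝ :=
  Finset.univ.sup' Finset.univ_nonempty fun γ => ∑ j, v j γ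

/-- The typeSlice `Θ_i(v_{-i})`: types for agent `i` consistent with the others' types in `v`. -/
def typeSlice (Θ : Set (Fin n → Γ → ℝ)) (i : Fin n) (v : Fin n → Γ → ℝ) : Set (Γ → ℝ) :=
  {vi | Function.update v i vi ∈ Θ}

/-- `f` depends only on the coordinates other than `i` (i.e. is a function of `v_{-i}`). -/
def IndepOf (i : Fin n) (f : (Fin n → Γ → ℝ) → ℝ) : Prop :=
  ∀ v v' : Fin n → Γ → ℝ, (∀ j, j ≠ i → v j = v' j) → f v = f v'

/-- Incentive compatibility of a pricing rule `p` w.r.t. allocation function `f`. -/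
def IC (Θ : Set (Fin n → Γ → ℝ)) (f : (Fin n → Γ → ℝ) → Γ)
    (p : Fin n → (Fin n → Γ → ℝ) → ℝ) : Prop :=
  ∀ (i : Fin n) (v v' : Fin n → Γ → ℝ), v ∈ Θ → v' ∈ Θ → (∀ j, j ≠ i → v j = v' j) →
    v i (f v) - p i v ≥ v i (f v') - p i v'

/-- Individual rationality of a pricing rule `p` w.r.t. allocation function `f`. -/
def IR (Θ : Set (Fin n → Γ → ℝ)) (f : (Fin n → Γ → ℝ) → Γ)
    (p : Fin n → (Fin n → Γ → ℝ) → ℝ) : Prop :=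
  ∀ (i : Fin n), ∀ v ∈ Θ, v i (f v) - p i v ≥ 0

/-- `Θ_i^α(v_{-i})`: types of agent `i` leading to efficient allocation `α`. -/
def allocSlice (Θ : Set (Fin n → Γ → ℝ)) (αeff : (Fin n → Γ → ℝ) → Γ)
    (i : Fin n) (v : Fin n → Γ → ℝ) (α : Γ) : Set (Γ → ℝ) :=
  {vi | vi ∈ typeSlice Θ i v ∧ αeff (Function.update v i vi) = α}

/-- The weakest-type pricing rule. -/
noncomputable def pWT [Fintype Γ] [Nonempty Γ] (Θ : Set (Fin n → Γ → ℝ))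
    (αeff : (Fin n → Γ → ℝ) → Γ) (i : Fin n) (v : Fin n → Γ → ℝ) : ℝ :=
  sInf ((fun vi => welfare (Function.update v i vi)) '' typeSlice Θ i v)
    - ∑ j ∈ Finset.univ.erase i, v j (αeff v)

/-- The constraints Constr-Γ at `v_{-i}` for a family `(h^α)_{α ∈ Γ}`. -/
def ConstrGamma [Fintype Γ] [Nonempty Γ] (Θ : Set (Fin n → Γ → ℝ))
    (αeff : (Fin n → Γ → ℝ) → Γ) (i : Fin n) (v : Fin n → Γ → ℝ) (h : Γ → ℝ) : Prop :=
  (∀ α : Γ, ∀ vt ∈ allocSlice Θ αeff i v α, h α ≤ welfare (Function.update v i vt)) ∧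
  (∀ α β : Γ, ∀ vt ∈ allocSlice Θ αeff i v α,
    h α - h β ≤ welfare (Function.update v i vt)
      - (vt β + ∑ j ∈ Finset.univ.erase i, v j β))

/-- The constraints Constr-C at `v_{-i}` for a family indexed by connected components. -/
def ConstrC [Fintype Γ] [Nonempty Γ] (Θ : Set (Fin n → Γ → ℝ))
    (αeff : (Fin n → Γ → ℝ) → Γ) (i : Fin n) (v : Fin n → Γ → ℝ)
    (h : Set (Γ → ℝ) → ℝ) : Prop :=
  (∀ vt ∈ typeSlice Θ i v,
    h (connectedComponentIn (typeSlice Θ i v) vt) ≤ welfare (Function.update v i vt)) ∧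
  (∀ vC ∈ typeSlice Θ i v, ∀ vD ∈ typeSlice Θ i v,
    h (connectedComponentIn (typeSlice Θ i v) vC) - h (connectedComponentIn (typeSlice Θ i v) vD)
      ≤ welfare (Function.update v i vC)
        - (vC (αeff (Function.update v i vD))
            + ∑ j ∈ Finset.univ.erase i, v j (αeff (Function.update v i vD))))

set_option linter.unusedSectionVars false

namespace GrovesAux

variable [Fintype Γ] [Nonempty Γ]
variable {Θ : Set (Fin n → Γ → ℝ)} {αeff : (Fin n → Γ → ℝ) → Γ}
  {p : Fin n → (Fin n → Γ → ℝ) → ℝ}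

lemma sum_update_eq (v : Fin n → Γ → ℝ) (i : Fin n) (x : Γ → ℝ) (γ : Γ) :
    ∑ j, Function.update v i x j γ = x γ + ∑ j ∈ Finset.univ.erase i, v j γ := by
  rw [← Finset.add_sum_erase _ _ (Finset.mem_univ i)]
  congr 1
  · rw [Function.update_self]
  · exact Finset.sum_congr rfl fun j hj => by
      rw [Function.update_of_ne (Finset.mem_erase.1 hj).1]

lemma le_welfare (v : Fin n → Γ → ℝ) (γ : Γ) : ∑ j, v j γ ≤ welfare v := by
  unfold welfare
  exact Finset.le_sup' (fun γ => ∑ j, v j γ) (Finset.mem_univ γ)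

/-- The Groves value `p_i(v_i, v_{-i}) + ∑_{j≠i} v_j(α^eff(v_i,v_{-i}))` as a function of `v_i`. -/
noncomputable def grv (p : Fin n → (Fin n → Γ → ℝ) → ℝ) (αeff : (Fin n → Γ → ℝ) → Γ)
    (i : Fin n) (v : Fin n → Γ → ℝ) (x : Γ → ℝ) : ℝ :=
  p i (Function.update v i x)
    + ∑ j ∈ Finset.univ.erase i, v j (αeff (Function.update v i x))

open Classical

/-- The component-wise constants. -/
noncomputable def hAux (Θ : Set (Fin n → Γ → ℝ)) (αeff : (Fin n → Γ → ℝ) → Γ)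
    (p : Fin n → (Fin n → Γ → ℝ) → ℝ) (i : Fin n) (v : Fin n → Γ → ℝ)
    (C : Set (Γ → ℝ)) : ℝ :=
  if hne : (C ∩ typeSlice Θ i v).Nonempty then grv p αeff i v hne.choose else 0

lemma update_congr {i : Fin n} {v v' : Fin n → Γ → ℝ} (hvv' : ∀ j, j ≠ i → v j = v' j)
    (x : Γ → ℝ) : Function.update v i x = Function.update v' i x := by
  funext j
  rcases eq_or_ne j i with rfl | hj
  · simp only [Function.update_self]
  · rw [Function.update_of_ne hj, Function.update_of_ne hj, hvv' j hj]

lemma typeSlice_congr {i : Fin n} {v v' : Fin n → Γ → ℝ} (hvv' : ∀ j, j ≠ i → v j = v' j) :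
    typeSlice Θ i v = typeSlice Θ i v' := by
  ext x
  show Function.update v i x ∈ Θ ↔ Function.update v' i x ∈ Θ
  rw [update_congr hvv' x]

lemma sum_erase_congr {i : Fin n} {v v' : Fin n → Γ → ℝ} (hvv' : ∀ j, j ≠ i → v j = v' j)
    (γ : Γ) : ∑ j ∈ Finset.univ.erase i, v j γ = ∑ j ∈ Finset.univ.erase i, v' j γ :=
  Finset.sum_congr rfl fun j hj => by rw [hvv' j (Finset.mem_erase.1 hj).1]

lemma grv_congr {i : Fin n} {v v' : Fin n → Γ → ℝ} (hvv' : ∀ j, j ≠ i → v j = v' j)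
    (x : Γ → ℝ) : grv p αeff i v x = grv p αeff i v' x := by
  unfold grv
  rw [update_congr hvv' x, sum_erase_congr hvv']

lemma dite_choice_congr {α β : Type*} (f : α → β) (A B : Set α) (hAB : A = B) (c : β) :
    (if h : A.Nonempty then f h.choose else c)
      = (if h : B.Nonempty then f h.choose else c) := by
  subst hAB; rfl

lemma hAux_indep {i : Fin n} {v v' : Fin n → Γ → ℝ} (hvv' : ∀ j, j ≠ i → v j = v' j)
    (C : Set (Γ → ℝ)) : hAux Θ αeff p i v C = hAux Θ αeff p i v' C := by
  have hts : C ∩ typeSlice Θ i v = C ∩ typeSlice Θ i v' := by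
    rw [typeSlice_congr hvv']
  have hg : grv p αeff i v = grv p αeff i v' := funext (grv_congr hvv')
  unfold hAux
  rw [hg]
  exact dite_choice_congr (grv p αeff i v') _ _ hts 0

lemma welfare_update (heff : ∀ v : Fin n → Γ → ℝ, ∑ j, v j (αeff v) = welfare v)
    (v : Fin n → Γ → ℝ) (i : Fin n) (x : Γ → ℝ) :
    welfare (Function.update v i x)
      = x (αeff (Function.update v i x))
        + ∑ j ∈ Finset.univ.erase i, v j (αeff (Function.update v i x)) := by
  rw [← heff (Function.update v i x), sum_update_eq]

lemma le_welfare_update (v : Fin n → Γ → ℝ) (i : Fin n) (x : Γ → ℝ) (γ : Γ) :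
    x γ + ∑ j ∈ Finset.univ.erase i, v j γ ≤ welfare (Function.update v i x) := by
  rw [← sum_update_eq]
  exact le_welfare _ γ

/-- The key consequence of IC. -/
lemma key (heff : ∀ v : Fin n → Γ → ℝ, ∑ j, v j (αeff v) = welfare v) (hIC : IC Θ αeff p)
    (i : Fin n) (v : Fin n → Γ → ℝ) {x x' : Γ → ℝ}
    (hx : x ∈ typeSlice Θ i v) (hx' : x' ∈ typeSlice Θ i v) :
    grv p αeff i v x - grv p αeff i v x'
      ≤ welfare (Function.update v i x)
        - (x (αeff (Function.update v i x'))
            + ∑ j ∈ Finset.univ.erase i, v j (αeff (Function.update v i x'))) := by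
  have hIC' := hIC i (Function.update v i x) (Function.update v i x') hx hx'
    (fun j hj => by rw [Function.update_of_ne hj, Function.update_of_ne hj])
  simp only [Function.update_self] at hIC'
  have hw := welfare_update heff v i x
  unfold grv
  linarith

lemma grv_eq_of_alloc (heff : ∀ v : Fin n → Γ → ℝ, ∑ j, v j (αeff v) = welfare v)
    (hIC : IC Θ αeff p) (i : Fin n) (v : Fin n → Γ → ℝ) {x x' : Γ → ℝ}
    (hx : x ∈ typeSlice Θ i v) (hx' : x' ∈ typeSlice Θ i v)
    (hα : αeff (Function.update v i x) = αeff (Function.update v i x')) :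
    grv p αeff i v x = grv p αeff i v x' := by
  have h1 := key heff hIC i v hx hx'
  have h2 := key heff hIC i v hx' hx
  have hw1 := welfare_update heff v i x
  have hw2 := welfare_update heff v i x'
  rw [hα] at hw1
  rw [← hα] at hw2
  linarith

lemma grv_lipschitz (heff : ∀ v : Fin n → Γ → ℝ, ∑ j, v j (αeff v) = welfare v)
    (hIC : IC Θ αeff p) (i : Fin n) (v : Fin n → Γ → ℝ) :
    LipschitzOnWith 2 (grv p αeff i v) (typeSlice Θ i v) := by
  rw [lipschitzOnWith_iff_dist_le_mul]
  intro x hx y hy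
  have hdd : ∀ γ, |x γ - y γ| ≤ dist x y := fun γ => by
    have := dist_le_pi_dist x y γ
    rwa [Real.dist_eq] at this
  have key1 := key heff hIC i v hx hy
  have key2 := key heff hIC i v hy hx
  set βx := αeff (Function.update v i x)
  set βy := αeff (Function.update v i y)
  have hwx : welfare (Function.update v i x)
      = x βx + ∑ j ∈ Finset.univ.erase i, v j βx := welfare_update heff v i x
  have hwy : welfare (Function.update v i y)
      = y βy + ∑ j ∈ Finset.univ.erase i, v j βy := welfare_update heff v i y
  have hle1 : y βx + ∑ j ∈ Finset.univ.erase i, v j βx ≤ welfare (Function.update v i y) :=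
    le_welfare_update v i y βx
  have hle2 : x βy + ∑ j ∈ Finset.univ.erase i, v j βy ≤ welfare (Function.update v i x) :=
    le_welfare_update v i x βy
  have ha1 := abs_le.1 (hdd βx)
  have ha2 := abs_le.1 (hdd βy)
  rw [Real.dist_eq]
  have : ((2 : NNReal) : ℝ) = 2 := by norm_num
  rw [this, abs_le]
  constructor <;> linarith

lemma subsingleton_of_finite_preconnected {K : Set ℝ} (h1 : IsPreconnected K)
    (h2 : K.Finite) : K.Subsingleton := by
  intro a ha b hb
  by_contra hne
  have hoc := h1.ordConnected
  rcases Ne.lt_or_gt hne with h | h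
  · exact Set.Icc_infinite h (h2.subset (hoc.out ha hb))
  · exact Set.Icc_infinite h (h2.subset (hoc.out hb ha))

lemma grv_image_finite (heff : ∀ v : Fin n → Γ → ℝ, ∑ j, v j (αeff v) = welfare v)
    (hIC : IC Θ αeff p) (i : Fin n) (v : Fin n → Γ → ℝ) :
    ((grv p αeff i v) '' typeSlice Θ i v).Finite := by
  have hsub : (grv p αeff i v) '' typeSlice Θ i v ⊆
      Set.range (fun γ : Γ => sInf ((grv p αeff i v) ''
        {x | x ∈ typeSlice Θ i v ∧ αeff (Function.update v i x) = γ})) := by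
    rintro _ ⟨x, hx, rfl⟩
    refine ⟨αeff (Function.update v i x), ?_⟩
    have hss : (grv p αeff i v) ''
        {x' | x' ∈ typeSlice Θ i v ∧ αeff (Function.update v i x') =
          αeff (Function.update v i x)} = {grv p αeff i v x} := by
      ext y
      constructor
      · rintro ⟨x', ⟨hx', hα⟩, rfl⟩
        rw [Set.mem_singleton_iff]
        exact grv_eq_of_alloc heff hIC i v hx' hx hα
      · rintro rfl
        exact ⟨x, ⟨hx, rfl⟩, rfl⟩
    show sInf ((grv p αeff i v) ''
        {x' | x' ∈ typeSlice Θ i v ∧ αeff (Function.update v i x') =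
          αeff (Function.update v i x)}) = grv p αeff i v x
    rw [hss, csInf_singleton]
  exact (Set.finite_range _).subset hsub

lemma grv_const_on_component (heff : ∀ v : Fin n → Γ → ℝ, ∑ j, v j (αeff v) = welfare v)
    (hIC : IC Θ αeff p) (i : Fin n) (v : Fin n → Γ → ℝ) {x y : Γ → ℝ}
    (hx : x ∈ typeSlice Θ i v) (hy : y ∈ connectedComponentIn (typeSlice Θ i v) x) :
    grv p αeff i v y = grv p αeff i v x := by
  have hsub := connectedComponentIn_subset (typeSlice Θ i v) x
  have hcont : ContinuousOn (grv p αeff i v) (connectedComponentIn (typeSlice Θ i v) x) :=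
    ((grv_lipschitz heff hIC i v).mono hsub).continuousOn
  have himg : IsPreconnected ((grv p αeff i v) '' connectedComponentIn (typeSlice Θ i v) x) :=
    isPreconnected_connectedComponentIn.image _ hcont
  have hfin : ((grv p αeff i v) '' connectedComponentIn (typeSlice Θ i v) x).Finite :=
    (grv_image_finite heff hIC i v).subset (Set.image_mono hsub)
  exact subsingleton_of_finite_preconnected himg hfin ⟨y, hy, rfl⟩
    ⟨x, mem_connectedComponentIn hx, rfl⟩

lemma hAux_eq (heff : ∀ v : Fin n → Γ → ℝ, ∑ j, v j (αeff v) = welfare v)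
    (hIC : IC Θ αeff p) {i : Fin n} {v : Fin n → Γ → ℝ} {x : Γ → ℝ}
    (hx : x ∈ typeSlice Θ i v) :
    hAux Θ αeff p i v (connectedComponentIn (typeSlice Θ i v) x) = grv p αeff i v x := by
  have hne : (connectedComponentIn (typeSlice Θ i v) x ∩ typeSlice Θ i v).Nonempty :=
    ⟨x, mem_connectedComponentIn hx, hx⟩
  unfold hAux
  rw [dif_pos hne]
  exact grv_const_on_component heff hIC i v hx hne.choose_spec.1

end GrovesAux

/-- Connected-component characterization of IC and IR pricing rules. -/
theorem IC_IR_iff_componentwise_groves_constr [Fintype Γ] [Nonempty Γ]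
    (Θ : Set (Fin n → Γ → ℝ))
    (αeff : (Fin n → Γ → ℝ) → Γ)
    (heff : ∀ v : Fin n → Γ → ℝ, ∑ j, v j (αeff v) = welfare v)
    (p : Fin n → (Fin n → Γ → ℝ) → ℝ) :
    (IC Θ αeff p ∧ IR Θ αeff p) ↔
      ∃ h : Fin n → (Fin n → Γ → ℝ) → Set (Γ → ℝ) → ℝ,
        (∀ (i : Fin n) (C : Set (Γ → ℝ)), IndepOf i (fun v => h i v C)) ∧
        (∀ i : Fin n, ∀ v ∈ Θ,
          p i v = h i v (connectedComponentIn (typeSlice Θ i v) (v i))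
            - ∑ j ∈ Finset.univ.erase i, v j (αeff v)) ∧
        (∀ (i : Fin n) (v : Fin n → Γ → ℝ), (typeSlice Θ i v).Nonempty →
          ConstrC Θ αeff i v (h i v)) := by
  classical
  constructor
  · rintro ⟨hIC, hIR⟩
    refine ⟨GrovesAux.hAux Θ αeff p, ?_, ?_, ?_⟩
    · intro i C v v' hvv'
      exact GrovesAux.hAux_indep hvv' C
    · intro i v hv
      have hvi : v i ∈ typeSlice Θ i v := by
        show Function.update v i (v i) ∈ Θ
        rwa [Function.update_eq_self]
      rw [GrovesAux.hAux_eq heff hIC hvi]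
      unfold GrovesAux.grv
      rw [Function.update_eq_self]
      ring
    · intro i v _hne
      constructor
      · intro vt hvt
        rw [GrovesAux.hAux_eq heff hIC hvt]
        have hIRt := hIR i (Function.update v i vt) hvt
        rw [Function.update_self] at hIRt
        have hw := GrovesAux.welfare_update heff v i vt
        unfold GrovesAux.grv
        linarith
      · intro vC hC vD hD
        rw [GrovesAux.hAux_eq heff hIC hC, GrovesAux.hAux_eq heff hIC hD]
        exact GrovesAux.key heff hIC i v hC hD
  · rintro ⟨h, hindep, hform, hconstr⟩
    constructor
    · intro i v v' hv hv' hvv'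
      have hvi : v i ∈ typeSlice Θ i v := by
        show Function.update v i (v i) ∈ Θ
        rwa [Function.update_eq_self]
      have hupdv' : Function.update v i (v' i) = v' := by
        rw [GrovesAux.update_congr hvv' (v' i), Function.update_eq_self]
      have hv'i : v' i ∈ typeSlice Θ i v := by
        show Function.update v i (v' i) ∈ Θ
        rwa [hupdv']
      have hc := (hconstr i v ⟨v i, hvi⟩).2 (v i) hvi (v' i) hv'i
      rw [Function.update_eq_self, hupdv'] at hc
      have hp := hform i v hv
      have hp' := hform i v' hv'
      have hvv'' : ∀ j, j ≠ i → v' j = v j := fun j hj => (hvv' j hj).symm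
      have hts : typeSlice Θ i v' = typeSlice Θ i v := GrovesAux.typeSlice_congr hvv''
      rw [hts] at hp'
      have hh : h i v' (connectedComponentIn (typeSlice Θ i v) (v' i))
          = h i v (connectedComponentIn (typeSlice Θ i v) (v' i)) :=
        hindep i (connectedComponentIn (typeSlice Θ i v) (v' i)) v' v hvv''
      rw [hh, GrovesAux.sum_erase_congr hvv'' (αeff v')] at hp'
      have hw : welfare v = v i (αeff v) + ∑ j ∈ Finset.univ.erase i, v j (αeff v) := by
        rw [← heff v, ← Finset.add_sum_erase _ _ (Finset.mem_univ i)]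
      rw [hp, hp']
      linarith
    · intro i v hv
      have hvi : v i ∈ typeSlice Θ i v := by
        show Function.update v i (v i) ∈ Θ
        rwa [Function.update_eq_self]
      have hc := (hconstr i v ⟨v i, hvi⟩).1 (v i) hvi
      rw [Function.update_eq_self] at hc
      have hw : welfare v = v i (αeff v) + ∑ j ∈ Finset.univ.erase i, v j (αeff v) := by
        rw [← heff v, ← Finset.add_sum_erase _ _ (Finset.mem_univ i)]
      rw [hform i v hv]
      linarith
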